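/- Let R = K[x,y,z,w] and b ≥ 1. The five polynomials w², w(xz−y²), (xz−y²)², x^b(xz−y²) − y z^b w, x^{b−1}y(xz−y²) − z^{b+1}w form a Gröbner basis with respect to the degree reverse lexicographic order with x > y > z > w of the ideal they generate. -/
import Mathlib


open MvPolynomial

/-- Degrevlex on exponents in 4 variables `x > y > z > w` (indices `0 > 1 > 2 > 3`). -/
def drlt {N : ℕ} (a b : Fin N →₀ ℕ) : Prop :=
  (∑ i, a i) < (∑ i, b i) ∨
  ((∑ i, a i) = (∑ i, b i) ∧ ∃ i : Fin N, b i < a i ∧ ∀ j : Fin N, i < j → a j = b j)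

/-- `d` is the leading monomial (exponent) of `f` with respect to the term order `lt`. -/
def IsLeadMon {K : Type*} [Field K] {N : ℕ}
    (lt : (Fin N →₀ ℕ) → (Fin N →₀ ℕ) → Prop)
    (f : MvPolynomial (Fin N) K) (d : Fin N →₀ ℕ) : Prop :=
  d ∈ f.support ∧ ∀ e ∈ f.support, e ≠ d → lt e d

/-- The initial ideal of `I` with respect to the term order `lt`. -/
noncomputable def initialIdeal {K : Type*} [Field K] {N : ℕ}
    (lt : (Fin N →₀ ℕ) → (Fin N →₀ ℕ) → Prop)
    (I : Ideal (MvPolynomial (Fin N) K)) : Ideal (MvPolynomial (Fin N) K) :=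
  Ideal.span {m | ∃ f ∈ I, f ≠ 0 ∧ ∃ d, IsLeadMon lt f d ∧ m = monomial d 1}

namespace GB16

abbrev M4 := Fin 4 →₀ ℕ
abbrev M2 := Fin 2 →₀ ℕ

noncomputable def mk4 (a c d e : ℕ) : M4 :=
  Finsupp.single 0 a + Finsupp.single 1 c + Finsupp.single 2 d + Finsupp.single 3 e

@[simp] lemma mk4_apply0 (a c d e : ℕ) : mk4 a c d e 0 = a := by
  simp [mk4, Finsupp.single_apply]
@[simp] lemma mk4_apply1 (a c d e : ℕ) : mk4 a c d e 1 = c := by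
  simp [mk4, Finsupp.single_apply]
@[simp] lemma mk4_apply2 (a c d e : ℕ) : mk4 a c d e 2 = d := by
  simp [mk4, Finsupp.single_apply]
@[simp] lemma mk4_apply3 (a c d e : ℕ) : mk4 a c d e 3 = e := by
  simp [mk4, Finsupp.single_apply]

lemma m4_eta (m : M4) : mk4 (m 0) (m 1) (m 2) (m 3) = m := by
  ext i; fin_cases i <;> simp [mk4, Finsupp.single_apply]

def deg (m : M4) : ℕ := ∑ i, m i

lemma deg_eq (m : M4) : deg m = m 0 + m 1 + m 2 + m 3 := by
  rw [deg, Fin.sum_univ_four]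

lemma coord_le_deg (m : M4) (i : Fin 4) : m i ≤ deg m :=
  Finset.single_le_sum (fun j _ => Nat.zero_le _) (Finset.mem_univ i)

lemma drlt_asymm {a b : M4} (h : drlt a b) : ¬ drlt b a := by
  rcases h with h | ⟨hdeg, i, hi, hj⟩
  · rintro (h' | ⟨hdeg', _⟩) <;> omega
  · rintro (h' | ⟨hdeg', i', hi', hj'⟩)
    · omega
    · rcases lt_trichotomy i i' with hc | rfl | hc
      · have := hj i' hc; omega
      · omega
      · have := hj' i hc; omega

lemma drlt_total {a b : M4} (h : a ≠ b) : drlt a b ∨ drlt b a := by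
  rcases lt_trichotomy (∑ i, a i) (∑ i, b i) with hd | hd | hd
  · exact Or.inl (Or.inl hd)
  · have hne : ∃ i, a i ≠ b i := by
      by_contra hc; push_neg at hc; exact h (Finsupp.ext hc)
    classical
    set s : Finset (Fin 4) := Finset.univ.filter (fun i => a i ≠ b i) with hs
    have hsne : s.Nonempty := by
      obtain ⟨i, hi⟩ := hne
      exact ⟨i, by simp [hs, hi]⟩
    set i := s.max' hsne with hidef
    have his : i ∈ s := s.max'_mem hsne
    have hine : a i ≠ b i := by simpa [hs] using his
    have hgt : ∀ j : Fin 4, i < j → a j = b j := by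
      intro j hij
      by_contra hc
      have : j ∈ s := by simp [hs, hc]
      exact absurd (s.le_max' j this) (not_le.mpr hij)
    rcases lt_or_gt_of_ne hine with hlt | hlt
    · exact Or.inr (Or.inr ⟨hd.symm, i, hlt, fun j hj => (hgt j hj).symm⟩)
    · exact Or.inl (Or.inr ⟨hd, i, hlt, hgt⟩)
  · exact Or.inr (Or.inl hd)

lemma sum4_add (x y : M4) : (∑ i, (x + y) i) = (∑ i, x i) + (∑ i, y i) := by
  simp [Finsupp.add_apply, Finset.sum_add_distrib]

lemma drlt_add_right {a b : M4} (c : M4) (h : drlt a b) : drlt (a + c) (b + c) := by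
  rcases h with h | ⟨hdeg, i, hi, hj⟩
  · left; rw [sum4_add, sum4_add]; omega
  · right
    refine ⟨by rw [sum4_add, sum4_add]; omega, i, by simp [Finsupp.add_apply]; omega, ?_⟩
    intro j hij
    have := hj j hij
    simp [Finsupp.add_apply, this]

def rho (m : M4) : ℕ :=
  (deg m + 1)^4 + (deg m - m 3) * (deg m + 1)^2 + (deg m - m 2) * (deg m + 1) + (deg m - m 1)

lemma fin4_cases (i : Fin 4) : i = 0 ∨ i = 1 ∨ i = 2 ∨ i = 3 := by
  fin_cases i <;> simp

lemma rho_lt_of_drlt {a b : M4} (h : drlt a b) : rho a < rho b := by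
  have ha1 := coord_le_deg a 1
  have ha2 := coord_le_deg a 2
  have ha3 := coord_le_deg a 3
  have hb1 := coord_le_deg b 1
  have hb2 := coord_le_deg b 2
  have hb3 := coord_le_deg b 3
  rcases h with h | ⟨hdeg, i, hi, hj⟩
  · have hda : deg a < deg b := h
    have h1 : rho a < (deg a + 1)^4 + (deg a + 1)^3 := by
      have e1 : (deg a - a 3) * (deg a + 1)^2 ≤ deg a * (deg a+1)^2 :=
        Nat.mul_le_mul_right _ (by omega)
      have e2 : (deg a - a 2) * (deg a + 1) ≤ deg a * (deg a+1) :=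
        Nat.mul_le_mul_right _ (by omega)
      have e3 : deg a * (deg a+1)^2 + deg a * (deg a+1) + deg a + 1 = (deg a+1)^3 := by ring
      have e4 : deg a - a 1 ≤ deg a := by omega
      unfold rho; linarith
    have h2 : (deg a + 1)^4 + (deg a + 1)^3 ≤ (deg a + 2)^4 := by
      have hx : (deg a + 2)^4 = (deg a+1)^4 + (4*(deg a+1)^3 + (6*(deg a+1)^2 + (4*(deg a+1) + 1))) := by
        ring
      rw [hx]
      have := Nat.zero_le ((deg a+1)^2)
      have := Nat.zero_le ((deg a+1)^3)
      linarith
    have h3 : (deg a + 2)^4 ≤ (deg b + 1)^4 := Nat.pow_le_pow_left (by omega) _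
    have h4 : (deg b + 1)^4 ≤ rho b := by unfold rho; omega
    omega
  · have hD : deg a = deg b := hdeg
    unfold rho
    rw [hD]
    set D := deg b with hDdef
    rcases fin4_cases i with rfl | rfl | rfl | rfl
    · exfalso
      have e1 := hj 1 (by decide)
      have e2 := hj 2 (by decide)
      have e3 := hj 3 (by decide)
      have da := deg_eq a
      have db := deg_eq b
      omega
    · -- i = 1 : b 1 < a 1, a 2 = b 2, a 3 = b 3
      have e2 := hj 2 (by decide)
      have e3 := hj 3 (by decide)
      rw [e2, e3]
      have : D - a 1 < D - b 1 := by omega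
      omega
    · -- i = 2: b 2 < a 2, a 3 = b 3
      have e3 := hj 3 (by decide)
      rw [e3]
      have k1 : (D - a 2) * (D+1) + (D+1) ≤ (D - b 2) * (D+1) := by
        have h5 : (D - a 2) + 1 ≤ D - b 2 := by omega
        calc (D - a 2) * (D+1) + (D+1) = ((D - a 2) + 1) * (D+1) := by ring
          _ ≤ (D - b 2) * (D+1) := Nat.mul_le_mul_right _ h5
      have k2 : D - a 1 ≤ D := by omega
      have k3 : (0:ℕ) ≤ D - b 1 := Nat.zero_le _
      linarith
    · -- i = 3 : b 3 < a 3
      have k1 : (D - a 3) * (D+1)^2 + (D+1)^2 ≤ (D - b 3) * (D+1)^2 := by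
        have h5 : (D - a 3) +  1 ≤ D - b 3 := by omega
        calc (D - a 3) * (D+1)^2 + (D+1)^2 = ((D - a 3) + 1) * (D+1)^2 := by ring
          _ ≤ (D - b 3) * (D+1)^2 := Nat.mul_le_mul_right _ h5
      have k2 : (D - a 2) * (D + 1) ≤ D * (D+1) := Nat.mul_le_mul_right _ (by omega)
      have k3 : D * (D+1) + D + 1 = (D+1)^2 := by ring
      have k4 : D - a 1 ≤ D := by omega
      have k5 : (0:ℕ) ≤ (D - b 2) * (D+1) := Nat.zero_le _
      have k6 : (0:ℕ) ≤ D - b 1 := Nat.zero_le _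
      linarith

section Phi
variable {K : Type*} [Field K]

noncomputable def m2mk (u v : ℕ) : M2 := Finsupp.single 0 u + Finsupp.single 1 v

@[simp] lemma m2mk_apply0 (u v : ℕ) : m2mk u v 0 = u := by
  simp [m2mk, Finsupp.single_apply]
@[simp] lemma m2mk_apply1 (u v : ℕ) : m2mk u v 1 = v := by
  simp [m2mk, Finsupp.single_apply]

lemma m2mk_inj {u v u' v' : ℕ} (h : m2mk u v = m2mk u' v') : u = u' ∧ v = v' := by
  constructor
  · have := congrArg (fun f => f 0) h; simpa using this
  · have := congrArg (fun f => f 1) h; simpa using this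

noncomputable def em (m : M4) : M2 := m2mk (2 * m 0 + m 1) (m 1 + 2 * m 2)

noncomputable def phi : MvPolynomial (Fin 4) K →ₐ[K] MvPolynomial (Fin 2) K :=
  aeval ![X 0 ^ 2, X 0 * X 1, X 1 ^ 2, 0]

lemma monomial2_eq (u v : ℕ) (a : K) :
    monomial (m2mk u v) a = C a * (X 0 ^ u * X 1 ^ v) := by
  rw [monomial_eq, Finsupp.prod_fintype _ _ (fun i => pow_zero _), Fin.prod_univ_two]
  simp

lemma phi_monomial (m : M4) (a : K) :
    phi (monomial m a) = if m 3 = 0 then monomial (em m) a else 0 := by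
  rw [phi, aeval_monomial, Finsupp.prod_fintype _ _ (fun i => pow_zero _), Fin.prod_univ_four]
  simp only [Matrix.cons_val_zero, Matrix.cons_val_one, Matrix.head_cons, Matrix.cons_val_two,
    Matrix.tail_cons, Matrix.cons_val_three, Matrix.head_fin_const]
  by_cases h3 : m 3 = 0
  · rw [if_pos h3, h3, pow_zero, mul_one, em, monomial2_eq]
    rw [algebraMap_eq]
    ring
  · rw [if_neg h3, zero_pow h3, mul_zero, mul_zero]

lemma coeff_phi (f : MvPolynomial (Fin 4) K) (w : M2) :
    coeff w (phi f) = ∑ m ∈ f.support, (if m 3 = 0 ∧ em m = w then coeff m f else 0) := by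
  conv_lhs => rw [f.as_sum]
  rw [map_sum, coeff_sum]
  apply Finset.sum_congr rfl
  intro m _
  rw [phi_monomial]
  by_cases h3 : m 3 = 0
  · rw [if_pos h3, coeff_monomial]
    by_cases he : em m = w
    · simp [he, h3]
    · simp [he, h3]
  · simp [h3]

lemma tsub_single_apply (m : M4) (i j : Fin 4) :
    (m - Finsupp.single i 1 : M4) j = m j - (if i = j then 1 else 0) := by
  rw [Finsupp.tsub_apply, Finsupp.single_apply]

lemma coeff_phi_pderiv (i : Fin 4) (f : MvPolynomial (Fin 4) K) (w : M2) :
    coeff w (phi (pderiv i f)) = ∑ m ∈ f.support,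
      (if (m - Finsupp.single i 1 : M4) 3 = 0 ∧ em (m - Finsupp.single i 1) = w
        then coeff m f * (m i : K) else 0) := by
  conv_lhs => rw [f.as_sum]
  rw [map_sum, map_sum, coeff_sum]
  apply Finset.sum_congr rfl
  intro m _
  rw [pderiv_monomial, phi_monomial]
  by_cases h3 : (m - Finsupp.single i 1 : M4) 3 = 0
  · rw [if_pos h3, coeff_monomial]
    by_cases he : em (m - Finsupp.single i 1) = w
    · simp [he, h3]
    · simp [he, h3]
  · rw [Finsupp.tsub_apply] at h3
    simp [h3]

lemma sum_pair_helper {s : Finset M4} (g : M4 → K) (p q : M4) (hpq : p ≠ q)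
    (hcl : ∀ m ∈ s, g m ≠ 0 → m = p ∨ m = q)
    (h0 : ∀ x, x ∉ s → g x = 0) :
    ∑ m ∈ s, g m = g p + g q := by
  classical
  have h1 : ∑ m ∈ s, g m = ∑ m ∈ s ∪ {p, q}, g m :=
    Finset.sum_subset Finset.subset_union_left (fun x _ hxs => h0 x hxs)
  have h2 : ∑ m ∈ ({p, q} : Finset M4), g m = ∑ m ∈ s ∪ {p, q}, g m := by
    apply Finset.sum_subset Finset.subset_union_right
    intro x hx hxp
    rcases Finset.mem_union.mp hx with hx | hx
    · by_contra hne
      rcases hcl x hx hne with rfl | rfl <;> simp at hxp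
    · exact absurd hx hxp
  rw [h1, ← h2, Finset.sum_pair hpq]

lemma sum_single_helper {s : Finset M4} (g : M4 → K) (p : M4)
    (hcl : ∀ m ∈ s, g m ≠ 0 → m = p)
    (h0 : ∀ x, x ∉ s → g x = 0) :
    ∑ m ∈ s, g m = g p := by
  classical
  have h1 : ∑ m ∈ s, g m = ∑ m ∈ s ∪ {p}, g m :=
    Finset.sum_subset Finset.subset_union_left (fun x _ hxs => h0 x hxs)
  have h2 : ∑ m ∈ ({p} : Finset M4), g m = ∑ m ∈ s ∪ {p}, g m := by
    apply Finset.sum_subset Finset.subset_union_right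
    intro x hx hxp
    rcases Finset.mem_union.mp hx with hx | hx
    · by_contra hne
      rcases hcl x hx hne with rfl
      simp at hxp
    · exact absurd hx hxp
  rw [h1, ← h2, Finset.sum_singleton]

lemma m4_eq_mk4 {m : M4} {a c d e : ℕ} (h0 : m 0 = a) (h1 : m 1 = c) (h2 : m 2 = d)
    (h3 : m 3 = e) : m = mk4 a c d e := by
  subst h0 h1 h2 h3; exact (m4_eta m).symm

lemma m2mk_congr {u v u' v' : ℕ} (h1 : u = u') (h2 : v = v') : m2mk u v = m2mk u' v' := by
  rw [h1, h2]

/-- Nonstandard monomials: divisible by a lead monomial of the basis. -/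
def Nstd (b : ℕ) (m : M4) : Prop :=
  2 ≤ m 3 ∨ (2 ≤ m 1 ∧ 1 ≤ m 3) ∨ 4 ≤ m 1 ∨ (b ≤ m 0 ∧ 2 ≤ m 1) ∨ (b - 1 ≤ m 0 ∧ 3 ≤ m 1)

lemma em_def (m : M4) : em m = m2mk (2 * m 0 + m 1) (m 1 + 2 * m 2) := rfl

lemma em_tsub (m : M4) (i : Fin 4) :
    em (m - Finsupp.single i 1) =
      m2mk (2 * (m 0 - (if i = 0 then 1 else 0)) + (m 1 - (if i = 1 then 1 else 0)))
        ((m 1 - (if i = 1 then 1 else 0)) + 2 * (m 2 - (if i = 2 then 1 else 0))) := by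
  rw [em_def]
  apply m2mk_congr <;> rw [tsub_single_apply, tsub_single_apply] <;> try rw [tsub_single_apply]

lemma zero_off_support (f : MvPolynomial (Fin 4) K) (P : M4 → Prop) [DecidablePred P]
    (v : M4 → K) : ∀ x, x ∉ f.support →
      (if P x then coeff x f * v x else 0) = 0 := by
  intro x hx
  split_ifs
  · rw [notMem_support_iff.mp hx, zero_mul]
  · rfl

lemma zero_off_support' (f : MvPolynomial (Fin 4) K) (P : M4 → Prop) [DecidablePred P] :
    ∀ x, x ∉ f.support → (if P x then coeff x f else 0) = 0 := by
  intro x hx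
  split_ifs
  · exact notMem_support_iff.mp hx
  · rfl

lemma E1pair (f : MvPolynomial (Fin 4) K) (hphi : phi f = 0) (U V : ℕ)
    (p q : M4) (hp3 : p 3 = 0) (hq3 : q 3 = 0)
    (hpe : 2 * p 0 + p 1 = U) (hpe2 : p 1 + 2 * p 2 = V)
    (hqe : 2 * q 0 + q 1 = U) (hqe2 : q 1 + 2 * q 2 = V)
    (hpq : p ≠ q)
    (hcl : ∀ m ∈ f.support, m 3 = 0 → 2 * m 0 + m 1 = U → m 1 + 2 * m 2 = V →
      m = p ∨ m = q) :
    coeff p f + coeff q f = 0 := by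
  classical
  have h1 : coeff (m2mk U V) (phi f) = 0 := by rw [hphi, coeff_zero]
  rw [coeff_phi] at h1
  rw [sum_pair_helper _ p q hpq ?_ (zero_off_support' f _)] at h1
  · rw [if_pos ⟨hp3, by rw [em_def]; exact m2mk_congr hpe hpe2⟩,
      if_pos ⟨hq3, by rw [em_def]; exact m2mk_congr hqe hqe2⟩] at h1
    exact h1
  · intro m hm hne
    split_ifs at hne with hc
    · obtain ⟨h3, hem⟩ := hc
      rw [em_def] at hem
      obtain ⟨e1, e2⟩ := m2mk_inj hem
      exact hcl m hm h3 e1 e2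
    · exact absurd rfl hne

lemma E1single (f : MvPolynomial (Fin 4) K) (hphi : phi f = 0) (U V : ℕ)
    (p : M4) (hp3 : p 3 = 0)
    (hpe : 2 * p 0 + p 1 = U) (hpe2 : p 1 + 2 * p 2 = V)
    (hcl : ∀ m ∈ f.support, m 3 = 0 → 2 * m 0 + m 1 = U → m 1 + 2 * m 2 = V → m = p) :
    coeff p f = 0 := by
  classical
  have h1 : coeff (m2mk U V) (phi f) = 0 := by rw [hphi, coeff_zero]
  rw [coeff_phi] at h1
  rw [sum_single_helper _ p ?_ (zero_off_support' f _)] at h1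
  · rw [if_pos ⟨hp3, by rw [em_def]; exact m2mk_congr hpe hpe2⟩] at h1
    exact h1
  · intro m hm hne
    split_ifs at hne with hc
    · obtain ⟨h3, hem⟩ := hc
      rw [em_def] at hem
      obtain ⟨e1, e2⟩ := m2mk_inj hem
      exact hcl m hm h3 e1 e2
    · exact absurd rfl hne

lemma Zpair (b : ℕ) (f : MvPolynomial (Fin 4) K) (h : MvPolynomial (Fin 2) K)
    (hzet : phi (pderiv 2 f) = X 0 ^ (2*b+1) * h) (U V : ℕ) (hU : U < 2*b+1)
    (p q : M4) (hp3 : p 3 = 0) (hq3 : q 3 = 0)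
    (hpe : 2 * p 0 + p 1 = U) (hpe2 : p 1 + 2 * (p 2 - 1) = V) (hp2 : 1 ≤ p 2)
    (hqe : 2 * q 0 + q 1 = U) (hqe2 : q 1 + 2 * (q 2 - 1) = V) (hq2 : 1 ≤ q 2)
    (hpq : p ≠ q)
    (hcl : ∀ m ∈ f.support, m 3 = 0 → 1 ≤ m 2 → 2 * m 0 + m 1 = U →
      m 1 + 2 * (m 2 - 1) = V → m = p ∨ m = q) :
    coeff p f * (p 2 : K) + coeff q f * (q 2 : K) = 0 := by
  classical
  have h1 : coeff (m2mk U V) (phi (pderiv 2 f)) = 0 := by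
    rw [hzet, X_pow_eq_monomial, coeff_monomial_mul', if_neg]
    intro hle
    have h2 := (Finsupp.le_def.mp hle) 0
    simp [Finsupp.single_apply] at h2
    omega
  rw [coeff_phi_pderiv] at h1
  rw [sum_pair_helper _ p q hpq ?_ (zero_off_support f _ _)] at h1
  · rw [if_pos, if_pos] at h1
    · exact h1
    · refine ⟨by rw [tsub_single_apply]; simpa using hq3, ?_⟩
      rw [em_tsub]
      refine m2mk_congr (by norm_num; exact hqe) (by norm_num; exact hqe2)
    · refine ⟨by rw [tsub_single_apply]; simpa using hp3, ?_⟩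
      rw [em_tsub]
      refine m2mk_congr (by norm_num; exact hpe) (by norm_num; exact hpe2)
  · intro m hm hne
    split_ifs at hne with hc
    · obtain ⟨h3, hem⟩ := hc
      rw [tsub_single_apply] at h3
      norm_num at h3
      rw [em_tsub] at hem
      norm_num at hem
      obtain ⟨e1, e2⟩ := m2mk_inj hem
      have hm2 : 1 ≤ m 2 := by
        by_contra hc2
        apply hne
        have : m 2 = 0 := by omega
        rw [this]
        norm_num
      exact hcl m hm h3 hm2 e1 e2
    · exact absurd rfl hne

lemma Zsingle (b : ℕ) (f : MvPolynomial (Fin 4) K) (h : MvPolynomial (Fin 2) K)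
    (hzet : phi (pderiv 2 f) = X 0 ^ (2*b+1) * h) (U V : ℕ) (hU : U < 2*b+1)
    (p : M4) (hp3 : p 3 = 0)
    (hpe : 2 * p 0 + p 1 = U) (hpe2 : p 1 + 2 * (p 2 - 1) = V) (hp2 : 1 ≤ p 2)
    (hcl : ∀ m ∈ f.support, m 3 = 0 → 1 ≤ m 2 → 2 * m 0 + m 1 = U →
      m 1 + 2 * (m 2 - 1) = V → m = p) :
    coeff p f * (p 2 : K) = 0 := by
  classical
  have h1 : coeff (m2mk U V) (phi (pderiv 2 f)) = 0 := by
    rw [hzet, X_pow_eq_monomial, coeff_monomial_mul', if_neg]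
    intro hle
    have h2 := (Finsupp.le_def.mp hle) 0
    simp [Finsupp.single_apply] at h2
    omega
  rw [coeff_phi_pderiv] at h1
  rw [sum_single_helper _ p ?_ (zero_off_support f _ _)] at h1
  · rw [if_pos] at h1
    · exact h1
    · refine ⟨by rw [tsub_single_apply]; simpa using hp3, ?_⟩
      rw [em_tsub]
      refine m2mk_congr (by norm_num; exact hpe) (by norm_num; exact hpe2)
  · intro m hm hne
    split_ifs at hne with hc
    · obtain ⟨h3, hem⟩ := hc
      rw [tsub_single_apply] at h3
      norm_num at h3
      rw [em_tsub] at hem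
      norm_num at hem
      obtain ⟨e1, e2⟩ := m2mk_inj hem
      have hm2 : 1 ≤ m 2 := by
        by_contra hc2
        apply hne
        have : m 2 = 0 := by omega
        rw [this]
        norm_num
      exact hcl m hm h3 hm2 e1 e2
    · exact absurd rfl hne

lemma Dsingle (f : MvPolynomial (Fin 4) K) (hdel0 : phi (pderiv 3 f) = 0) (U V : ℕ)
    (p : M4) (hp3 : p 3 = 1)
    (hpe : 2 * p 0 + p 1 = U) (hpe2 : p 1 + 2 * p 2 = V)
    (hcl : ∀ m ∈ f.support, m 3 = 1 → 2 * m 0 + m 1 = U → m 1 + 2 * m 2 = V → m = p) :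
    coeff p f = 0 := by
  classical
  have h1 : coeff (m2mk U V) (phi (pderiv 3 f)) = 0 := by rw [hdel0, coeff_zero]
  rw [coeff_phi_pderiv] at h1
  rw [sum_single_helper _ p ?_ (zero_off_support f _ _)] at h1
  · rw [if_pos] at h1
    · rw [hp3] at h1
      simpa using h1
    · refine ⟨by rw [tsub_single_apply]; simp [hp3], ?_⟩
      rw [em_tsub]
      refine m2mk_congr (by norm_num; exact hpe) (by norm_num; exact hpe2)
  · intro m hm hne
    split_ifs at hne with hc
    · obtain ⟨h3, hem⟩ := hc
      rw [tsub_single_apply] at h3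
      norm_num at h3
      rw [em_tsub] at hem
      norm_num at hem
      obtain ⟨e1, e2⟩ := m2mk_inj hem
      have hm3 : m 3 = 1 := by
        by_contra hc2
        apply hne
        have : m 3 = 0 := by omega
        rw [this]
        norm_num
      exact hcl m hm hm3 e1 e2
    · exact absurd rfl hne

lemma mk4_ne1 {a c d e a' c' d' e' : ℕ} (h : c ≠ c') : mk4 a c d e ≠ mk4 a' c' d' e' := by
  intro hc
  apply h
  have := congrArg (fun t : M4 => t 1) hc
  simpa using this

lemma keyB (b : ℕ) (hb : 1 ≤ b) (f : MvPolynomial (Fin 4) K)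
    (h : MvPolynomial (Fin 2) K)
    (hstd : ∀ m ∈ f.support, ¬ Nstd b m)
    (hphi : phi f = 0)
    (hdel : phi (pderiv 3 f) = - (X 1 ^ (2*b+1) * h))
    (hzet : phi (pderiv 2 f) = X 0 ^ (2*b+1) * h) :
    f = 0 := by
  classical
  have hS : ∀ m ∈ f.support, m 1 ≤ 3 ∧ m 3 ≤ 1 ∧ (1 ≤ m 3 → m 1 ≤ 1) ∧
      (b ≤ m 0 → m 1 ≤ 1) ∧ (b - 1 ≤ m 0 → m 1 ≤ 2) := by
    intro m hm
    have hn := hstd m hm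
    unfold Nstd at hn
    omega
  have hnstd : ∀ m : M4, Nstd b m → coeff m f = 0 := fun m hm => by
    by_contra hc
    exact hstd m (mem_support_iff.mpr hc) hm
  -- basic phi-relations
  have PE1 : ∀ a d : ℕ, coeff (mk4 (a+1) 0 (d+1) 0) f + coeff (mk4 a 2 d 0) f = 0 := by
    intro a d
    apply E1pair f hphi (2*a+2) (2*d+2) _ _ (by simp) (by simp) (by simp only [mk4_apply0, mk4_apply1, mk4_apply2, mk4_apply3] <;> omega)
      (by simp only [mk4_apply0, mk4_apply1, mk4_apply2, mk4_apply3] <;> omega) (by simp only [mk4_apply0, mk4_apply1, mk4_apply2, mk4_apply3] <;> omega) (by simp only [mk4_apply0, mk4_apply1, mk4_apply2, mk4_apply3] <;> omega) (mk4_ne1 (by omega))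
    intro m hm h3 e1 e2
    have hs := hS m hm
    have hd : (m 0 = a+1 ∧ m 1 = 0 ∧ m 2 = d+1) ∨ (m 0 = a ∧ m 1 = 2 ∧ m 2 = d) := by omega
    rcases hd with ⟨u0,u1,u2⟩ | ⟨u0,u1,u2⟩
    · exact Or.inl (m4_eq_mk4 u0 u1 u2 h3)
    · exact Or.inr (m4_eq_mk4 u0 u1 u2 h3)
  have SE1a : ∀ a : ℕ, coeff (mk4 a 0 0 0) f = 0 := by
    intro a
    apply E1single f hphi (2*a) 0 _ (by simp) (by simp only [mk4_apply0, mk4_apply1, mk4_apply2, mk4_apply3] <;> omega) (by simp)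
    intro m hm h3 e1 e2
    have hs := hS m hm
    exact m4_eq_mk4 (by omega) (by omega) (by omega) h3
  have SE1b : ∀ d : ℕ, coeff (mk4 0 0 d 0) f = 0 := by
    intro d
    apply E1single f hphi 0 (2*d) _ (by simp) (by simp) (by simp only [mk4_apply0, mk4_apply1, mk4_apply2, mk4_apply3] <;> omega)
    intro m hm h3 e1 e2
    have hs := hS m hm
    exact m4_eq_mk4 (by omega) (by omega) (by omega) h3
  have PO1 : ∀ a d : ℕ, coeff (mk4 (a+1) 1 (d+1) 0) f + coeff (mk4 a 3 d 0) f = 0 := by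
    intro a d
    apply E1pair f hphi (2*a+3) (2*d+3) _ _ (by simp) (by simp) (by simp only [mk4_apply0, mk4_apply1, mk4_apply2, mk4_apply3] <;> omega)
      (by simp only [mk4_apply0, mk4_apply1, mk4_apply2, mk4_apply3] <;> omega) (by simp only [mk4_apply0, mk4_apply1, mk4_apply2, mk4_apply3] <;> omega) (by simp only [mk4_apply0, mk4_apply1, mk4_apply2, mk4_apply3] <;> omega) (mk4_ne1 (by omega))
    intro m hm h3 e1 e2
    have hs := hS m hm
    have hd : (m 0 = a+1 ∧ m 1 = 1 ∧ m 2 = d+1) ∨ (m 0 = a ∧ m 1 = 3 ∧ m 2 = d) := by omega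
    rcases hd with ⟨u0,u1,u2⟩ | ⟨u0,u1,u2⟩
    · exact Or.inl (m4_eq_mk4 u0 u1 u2 h3)
    · exact Or.inr (m4_eq_mk4 u0 u1 u2 h3)
  have SO1a : ∀ d : ℕ, coeff (mk4 0 1 d 0) f = 0 := by
    intro d
    apply E1single f hphi 1 (2*d+1) _ (by simp) (by simp) (by simp only [mk4_apply0, mk4_apply1, mk4_apply2, mk4_apply3] <;> omega)
    intro m hm h3 e1 e2
    have hs := hS m hm
    exact m4_eq_mk4 (by omega) (by omega) (by omega) h3
  have SO1b : ∀ a : ℕ, coeff (mk4 a 1 0 0) f = 0 := by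
    intro a
    apply E1single f hphi (2*a+1) 1 _ (by simp) (by simp only [mk4_apply0, mk4_apply1, mk4_apply2, mk4_apply3] <;> omega) (by simp)
    intro m hm h3 e1 e2
    have hs := hS m hm
    exact m4_eq_mk4 (by omega) (by omega) (by omega) h3
  -- zeta-relations
  have ZE0 : ∀ a : ℕ, a + 1 ≤ b → coeff (mk4 (a+1) 0 1 0) f = 0 := by
    intro a ha
    have hz := Zsingle b f h hzet (2*a+2) 0 (by omega) (mk4 (a+1) 0 1 0) (by simp)
      (by simp only [mk4_apply0, mk4_apply1, mk4_apply2, mk4_apply3] <;> omega) (by simp) (by simp) ?_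
    · simpa using hz
    intro m hm h3 h2 e1 e2
    have hs := hS m hm
    exact m4_eq_mk4 (by omega) (by omega) (by omega) h3
  have ZE1 : ∀ a d : ℕ, a + 1 ≤ b →
      coeff (mk4 (a+1) 0 (d+2) 0) f * ((d:K)+2) + coeff (mk4 a 2 (d+1) 0) f * ((d:K)+1) = 0 := by
    intro a d ha
    have hz := Zpair b f h hzet (2*a+2) (2*d+2) (by omega) (mk4 (a+1) 0 (d+2) 0)
      (mk4 a 2 (d+1) 0) (by simp) (by simp) (by simp only [mk4_apply0, mk4_apply1, mk4_apply2, mk4_apply3] <;> omega) (by simp only [mk4_apply0, mk4_apply1, mk4_apply2, mk4_apply3] <;> omega) (by simp)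
      (by simp only [mk4_apply0, mk4_apply1, mk4_apply2, mk4_apply3] <;> omega) (by simp only [mk4_apply0, mk4_apply1, mk4_apply2, mk4_apply3] <;> omega) (by simp) (mk4_ne1 (by omega)) ?_
    · simp only [mk4_apply2] at hz
      push_cast at hz
      convert hz using 2 <;> ring
    intro m hm h3 h2 e1 e2
    have hs := hS m hm
    have hd : (m 0 = a+1 ∧ m 1 = 0 ∧ m 2 = d+2) ∨ (m 0 = a ∧ m 1 = 2 ∧ m 2 = d+1) := by omega
    rcases hd with ⟨u0,u1,u2⟩ | ⟨u0,u1,u2⟩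
    · exact Or.inl (m4_eq_mk4 u0 u1 u2 h3)
    · exact Or.inr (m4_eq_mk4 u0 u1 u2 h3)
  have ZO0 : ∀ a : ℕ, 2*a + 3 ≤ 2*b → coeff (mk4 (a+1) 1 1 0) f = 0 := by
    intro a ha
    have hz := Zsingle b f h hzet (2*a+3) 1 (by omega) (mk4 (a+1) 1 1 0) (by simp)
      (by simp only [mk4_apply0, mk4_apply1, mk4_apply2, mk4_apply3] <;> omega) (by simp) (by simp) ?_
    · simpa using hz
    intro m hm h3 h2 e1 e2
    have hs := hS m hm
    exact m4_eq_mk4 (by omega) (by omega) (by omega) h3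
  have ZO1 : ∀ a d : ℕ, 2*a + 3 ≤ 2*b →
      coeff (mk4 (a+1) 1 (d+2) 0) f * ((d:K)+2) + coeff (mk4 a 3 (d+1) 0) f * ((d:K)+1) = 0 := by
    intro a d ha
    have hz := Zpair b f h hzet (2*a+3) (2*d+3) (by omega) (mk4 (a+1) 1 (d+2) 0)
      (mk4 a 3 (d+1) 0) (by simp) (by simp) (by simp only [mk4_apply0, mk4_apply1, mk4_apply2, mk4_apply3] <;> omega) (by simp only [mk4_apply0, mk4_apply1, mk4_apply2, mk4_apply3] <;> omega) (by simp)
      (by simp only [mk4_apply0, mk4_apply1, mk4_apply2, mk4_apply3] <;> omega) (by simp only [mk4_apply0, mk4_apply1, mk4_apply2, mk4_apply3] <;> omega) (by simp) (mk4_ne1 (by omega)) ?_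
    · simp only [mk4_apply2] at hz
      push_cast at hz
      convert hz using 2 <;> ring
    intro m hm h3 h2 e1 e2
    have hs := hS m hm
    have hd : (m 0 = a+1 ∧ m 1 = 1 ∧ m 2 = d+2) ∨ (m 0 = a ∧ m 1 = 3 ∧ m 2 = d+1) := by omega
    rcases hd with ⟨u0,u1,u2⟩ | ⟨u0,u1,u2⟩
    · exact Or.inl (m4_eq_mk4 u0 u1 u2 h3)
    · exact Or.inr (m4_eq_mk4 u0 u1 u2 h3)
  -- solve the linear systems
  have hc2 : ∀ a d : ℕ, coeff (mk4 a 2 d 0) f = 0 := by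
    intro a d
    by_cases hab : b ≤ a
    · exact hnstd _ (by unfold Nstd; simp; omega)
    · have ha : a + 1 ≤ b := by omega
      cases d with
      | zero =>
        have h1 := PE1 a 0
        rw [ZE0 a ha, zero_add] at h1
        exact h1
      | succ d' =>
        have h1 := PE1 a (d'+1)
        have h2 := ZE1 a d' ha
        have hP : coeff (mk4 (a+1) 0 (d'+2) 0) f = 0 := by
          linear_combination h2 - ((d':K)+1) * h1
        linear_combination h1 - hP
  have hc0 : ∀ a d : ℕ, coeff (mk4 a 0 d 0) f = 0 := by
    intro a d
    cases a with
    | zero => exact SE1b d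
    | succ a' =>
      cases d with
      | zero => exact SE1a (a'+1)
      | succ d' =>
        have h1 := PE1 a' d'
        rw [hc2 a' d', add_zero] at h1
        exact h1
  have hc3 : ∀ a d : ℕ, coeff (mk4 a 3 d 0) f = 0 := by
    intro a d
    by_cases hba : b - 1 ≤ a
    · exact hnstd _ (by unfold Nstd; simp; omega)
    · have hab : 2*a + 3 ≤ 2*b := by omega
      cases d with
      | zero =>
        have h1 := PO1 a 0
        rw [ZO0 a hab, zero_add] at h1
        exact h1
      | succ d' =>
        have h1 := PO1 a (d'+1)
        have h2 := ZO1 a d' hab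
        have hP : coeff (mk4 (a+1) 1 (d'+2) 0) f = 0 := by
          linear_combination h2 - ((d':K)+1) * h1
        linear_combination h1 - hP
  have hc1 : ∀ a d : ℕ, coeff (mk4 a 1 d 0) f = 0 := by
    intro a d
    cases a with
    | zero => exact SO1a d
    | succ a' =>
      cases d with
      | zero => exact SO1b (a'+1)
      | succ d' =>
        have h1 := PO1 a' d'
        rw [hc3 a' d', add_zero] at h1
        exact h1
  have hm30 : ∀ m : M4, m 3 = 0 → coeff m f = 0 := by
    intro m h3
    by_cases hm : m ∈ f.support
    · have hs := hS m hm
      have he : m = mk4 (m 0) (m 1) (m 2) 0 := m4_eq_mk4 rfl rfl rfl h3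
      have h1 : m 1 = 0 ∨ m 1 = 1 ∨ m 1 = 2 ∨ m 1 = 3 := by omega
      rcases h1 with h1|h1|h1|h1 <;> rw [he, h1]
      · exact hc0 _ _
      · exact hc1 _ _
      · exact hc2 _ _
      · exact hc3 _ _
    · exact notMem_support_iff.mp hm
  have hzet0 : phi (pderiv 2 f) = (0 : MvPolynomial (Fin 2) K) := by
    apply MvPolynomial.ext
    intro w
    rw [coeff_phi_pderiv, coeff_zero]
    apply Finset.sum_eq_zero
    intro m _
    split_ifs with hcnd
    · obtain ⟨h3, _⟩ := hcnd
      rw [tsub_single_apply] at h3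
      simp only [show ((2:Fin 4) = 3) = False by simp] at h3
      norm_num at h3
      rw [hm30 m (by omega), zero_mul]
    · rfl
  have h0 : h = 0 := by
    have hx := hzet.symm.trans hzet0
    rcases mul_eq_zero.mp hx with hx | hx
    · exact absurd hx (pow_ne_zero _ (X_ne_zero _))
    · exact hx
  have hdel0 : phi (pderiv 3 f) = (0 : MvPolynomial (Fin 2) K) := by
    rw [hdel, h0, mul_zero, neg_zero]
  have hm31 : ∀ m : M4, m 3 = 1 → coeff m f = 0 := by
    intro m h3
    by_cases hm : m ∈ f.support
    · have hs := hS m hm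
      have h1 : m 1 ≤ 1 := hs.2.2.1 (by omega)
      apply Dsingle f hdel0 (2*m 0 + m 1) (m 1 + 2*m 2) m h3 rfl rfl
      intro m' hm' h3' e1 e2
      have hs' := hS m' hm'
      have h1' : m' 1 ≤ 1 := hs'.2.2.1 (by omega)
      calc m' = mk4 (m 0) (m 1) (m 2) 1 := m4_eq_mk4 (by omega) (by omega) (by omega) h3'
        _ = m := (m4_eq_mk4 rfl rfl rfl h3).symm
    · exact notMem_support_iff.mp hm
  apply MvPolynomial.ext
  intro m
  rw [coeff_zero]
  by_cases hm : m ∈ f.support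
  · have hs := hS m hm
    have h1 : m 3 = 0 ∨ m 3 = 1 := by omega
    rcases h1 with h1 | h1
    · exact hm30 m h1
    · exact hm31 m h1
  · exact notMem_support_iff.mp hm

/-- The ideal of "analytic conditions". -/
noncomputable def Vb (K : Type*) [Field K] (b : ℕ) : Ideal (MvPolynomial (Fin 4) K) where
  carrier := {f | phi f = 0 ∧ ∃ h : MvPolynomial (Fin 2) K,
    phi (pderiv 3 f) = - (X 1 ^ (2*b+1) * h) ∧ phi (pderiv 2 f) = X 0 ^ (2*b+1) * h}
  add_mem' := by
    rintro f g ⟨hf0, hf, hfd, hfz⟩ ⟨hg0, hg, hgd, hgz⟩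
    refine ⟨by rw [map_add, hf0, hg0, add_zero], hf + hg, ?_, ?_⟩
    · rw [map_add, map_add, hfd, hgd]; ring
    · rw [map_add, map_add, hfz, hgz]; ring
  zero_mem' := ⟨by simp, 0, by simp, by simp⟩
  smul_mem' := by
    rintro r f ⟨hf0, hf, hfd, hfz⟩
    refine ⟨by rw [smul_eq_mul, map_mul, hf0, mul_zero], phi r * hf, ?_, ?_⟩
    · rw [smul_eq_mul, pderiv_mul, map_add, map_mul, map_mul, hf0, hfd]; ring
    · rw [smul_eq_mul, pderiv_mul, map_add, map_mul, map_mul, hf0, hfz]; ring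

lemma mem_Vb {K : Type*} [Field K] (b : ℕ) (f : MvPolynomial (Fin 4) K) :
    f ∈ Vb K b ↔ phi f = 0 ∧ ∃ h : MvPolynomial (Fin 2) K,
      phi (pderiv 3 f) = - (X 1 ^ (2*b+1) * h) ∧ phi (pderiv 2 f) = X 0 ^ (2*b+1) * h :=
  Iff.rfl

@[simp] lemma phi_X0 : phi (K := K) (X 0) = X 0 ^ 2 := by simp [phi]
@[simp] lemma phi_X1 : phi (K := K) (X 1) = X 0 * X 1 := by simp [phi]
@[simp] lemma phi_X2 : phi (K := K) (X 2) = X 1 ^ 2 := by simp [phi]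
@[simp] lemma phi_X3 : phi (K := K) (X 3) = 0 := by simp [phi]

lemma g1_mem (b : ℕ) : (X 3 ^ 2 : MvPolynomial (Fin 4) K) ∈ Vb K b := by
  refine ⟨?_, 0, ?_, ?_⟩ <;>
    (simp only [map_zero, map_neg, map_sub, map_add, pderiv_mul, pderiv_pow, pderiv_X_self,
      pderiv_X_of_ne (show (0:Fin 4) ≠ 3 by decide),
      pderiv_X_of_ne (show (1:Fin 4) ≠ 3 by decide),
      pderiv_X_of_ne (show (2:Fin 4) ≠ 3 by decide),
      pderiv_X_of_ne (show (0:Fin 4) ≠ 2 by decide),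
      pderiv_X_of_ne (show (1:Fin 4) ≠ 2 by decide),
      pderiv_X_of_ne (show (3:Fin 4) ≠ 2 by decide),
      map_mul, map_pow, map_one, map_natCast, map_ofNat, phi_X0, phi_X1, phi_X2, phi_X3,
      mul_zero, zero_mul, add_zero, zero_add, sub_zero, mul_one, zero_sub, neg_zero]) <;>
    (try ring)

lemma g2_mem (b : ℕ) :
    (X 3 * (X 0 * X 2 - X 1 ^ 2) : MvPolynomial (Fin 4) K) ∈ Vb K b := by
  refine ⟨?_, 0, ?_, ?_⟩ <;>
    (simp only [map_zero, map_neg, map_sub, map_add, pderiv_mul, pderiv_pow, pderiv_X_self,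
      pderiv_X_of_ne (show (0:Fin 4) ≠ 3 by decide),
      pderiv_X_of_ne (show (1:Fin 4) ≠ 3 by decide),
      pderiv_X_of_ne (show (2:Fin 4) ≠ 3 by decide),
      pderiv_X_of_ne (show (0:Fin 4) ≠ 2 by decide),
      pderiv_X_of_ne (show (1:Fin 4) ≠ 2 by decide),
      pderiv_X_of_ne (show (3:Fin 4) ≠ 2 by decide),
      map_mul, map_pow, map_one, map_natCast, map_ofNat, phi_X0, phi_X1, phi_X2, phi_X3,
      mul_zero, zero_mul, add_zero, zero_add, sub_zero, mul_one, zero_sub, neg_zero]) <;>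
    (try ring)

lemma g3_mem (b : ℕ) :
    ((X 0 * X 2 - X 1 ^ 2) ^ 2 : MvPolynomial (Fin 4) K) ∈ Vb K b := by
  refine ⟨?_, 0, ?_, ?_⟩ <;>
    (simp only [map_zero, map_neg, map_sub, map_add, pderiv_mul, pderiv_pow, pderiv_X_self,
      pderiv_X_of_ne (show (0:Fin 4) ≠ 3 by decide),
      pderiv_X_of_ne (show (1:Fin 4) ≠ 3 by decide),
      pderiv_X_of_ne (show (2:Fin 4) ≠ 3 by decide),
      pderiv_X_of_ne (show (0:Fin 4) ≠ 2 by decide),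
      pderiv_X_of_ne (show (1:Fin 4) ≠ 2 by decide),
      pderiv_X_of_ne (show (3:Fin 4) ≠ 2 by decide),
      map_mul, map_pow, map_one, map_natCast, map_ofNat, phi_X0, phi_X1, phi_X2, phi_X3,
      mul_zero, zero_mul, add_zero, zero_add, sub_zero, mul_one, zero_sub, neg_zero]) <;>
    (try ring)

lemma g4_mem (b : ℕ) :
    (X 0 ^ b * (X 0 * X 2 - X 1 ^ 2) - X 1 * X 2 ^ b * X 3 : MvPolynomial (Fin 4) K) ∈ Vb K b := by
  refine ⟨?_, X 0, ?_, ?_⟩ <;>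
    (simp only [map_zero, map_neg, map_sub, map_add, pderiv_mul, pderiv_pow, pderiv_X_self,
      pderiv_X_of_ne (show (0:Fin 4) ≠ 3 by decide),
      pderiv_X_of_ne (show (1:Fin 4) ≠ 3 by decide),
      pderiv_X_of_ne (show (2:Fin 4) ≠ 3 by decide),
      pderiv_X_of_ne (show (0:Fin 4) ≠ 2 by decide),
      pderiv_X_of_ne (show (1:Fin 4) ≠ 2 by decide),
      pderiv_X_of_ne (show (3:Fin 4) ≠ 2 by decide),
      map_mul, map_pow, map_one, map_natCast, map_ofNat, phi_X0, phi_X1, phi_X2, phi_X3,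
      mul_zero, zero_mul, add_zero, zero_add, sub_zero, mul_one, zero_sub, neg_zero]) <;>
    (try ring)

lemma g5_mem (b : ℕ) (hb : 1 ≤ b) :
    (X 0 ^ (b-1) * X 1 * (X 0 * X 2 - X 1 ^ 2) - X 2 ^ (b+1) * X 3 :
      MvPolynomial (Fin 4) K) ∈ Vb K b := by
  obtain ⟨b', rfl⟩ : ∃ b', b = b' + 1 := ⟨b - 1, by omega⟩
  simp only [Nat.add_sub_cancel]
  refine ⟨?_, X 1, ?_, ?_⟩ <;>
    (simp only [map_zero, map_neg, map_sub, map_add, pderiv_mul, pderiv_pow, pderiv_X_self,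
      pderiv_X_of_ne (show (0:Fin 4) ≠ 3 by decide),
      pderiv_X_of_ne (show (1:Fin 4) ≠ 3 by decide),
      pderiv_X_of_ne (show (2:Fin 4) ≠ 3 by decide),
      pderiv_X_of_ne (show (0:Fin 4) ≠ 2 by decide),
      pderiv_X_of_ne (show (1:Fin 4) ≠ 2 by decide),
      pderiv_X_of_ne (show (3:Fin 4) ≠ 2 by decide),
      map_mul, map_pow, map_one, map_natCast, map_ofNat, phi_X0, phi_X1, phi_X2, phi_X3,
      mul_zero, zero_mul, add_zero, zero_add, sub_zero, mul_one, zero_sub, neg_zero]) <;>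
    (try ring)


lemma leadmon_unique {f : MvPolynomial (Fin 4) K} {d d' : M4}
    (h : IsLeadMon drlt f d) (h' : IsLeadMon drlt f d') : d = d' := by
  by_contra hne
  exact drlt_asymm (h'.2 d h.1 hne) (h.2 d' h'.1 (Ne.symm hne))

lemma exists_leadmon {f : MvPolynomial (Fin 4) K} (hf : f ≠ 0) : ∃ d, IsLeadMon drlt f d := by
  obtain ⟨d, hd, hmax⟩ := Finset.exists_max_image f.support rho (support_nonempty.mpr hf)
  refine ⟨d, hd, ?_⟩
  intro e he hne
  rcases drlt_total hne with h | h
  · exact h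
  · exact absurd (rho_lt_of_drlt h) (not_lt.mpr (hmax e he))

lemma sum_mk4 (a c d e : ℕ) : (∑ i, (mk4 a c d e) i) = a + c + d + e := by
  rw [Fin.sum_univ_four]; simp

lemma drlt_wit2 {m m' : M4} (hdeg : ∑ i, m i = ∑ i, m' i) (h2 : m' 2 < m 2)
    (h3 : m 3 = m' 3) : drlt m m' := by
  refine Or.inr ⟨hdeg, 2, h2, ?_⟩
  intro j hj
  rcases fin4_cases j with rfl|rfl|rfl|rfl
  · exact absurd hj (by decide)
  · exact absurd hj (by decide)
  · exact absurd hj (by decide)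
  · exact h3

lemma drlt_wit3 {m m' : M4} (hdeg : ∑ i, m i = ∑ i, m' i) (h3 : m' 3 < m 3) : drlt m m' := by
  refine Or.inr ⟨hdeg, 3, h3, ?_⟩
  intro j hj
  rcases fin4_cases j with rfl|rfl|rfl|rfl <;> exact absurd hj (by decide)

lemma Xpow_prod (a c d e : ℕ) :
    (X 0 ^ a * X 1 ^ c * X 2 ^ d * X 3 ^ e : MvPolynomial (Fin 4) K) =
      monomial (mk4 a c d e) 1 := by
  rw [X_pow_eq_monomial, X_pow_eq_monomial, X_pow_eq_monomial, X_pow_eq_monomial,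
    monomial_mul, monomial_mul, monomial_mul, mk4]
  norm_num

lemma g1_eq : (X 3 ^ 2 : MvPolynomial (Fin 4) K) = monomial (mk4 0 0 0 2) 1 := by
  rw [← Xpow_prod]; ring

lemma g2_eq : (X 3 * (X 0 * X 2 - X 1 ^ 2) : MvPolynomial (Fin 4) K) =
    monomial (mk4 0 2 0 1) (-1) + monomial (mk4 1 0 1 1) 1 := by
  have h1 : (monomial (mk4 0 2 0 1) (-1 : K)) = - monomial (mk4 0 2 0 1) (1:K) := by
    rw [← map_neg]
  rw [h1, ← Xpow_prod, ← Xpow_prod]; ring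

lemma g3_eq : ((X 0 * X 2 - X 1 ^ 2) ^ 2 : MvPolynomial (Fin 4) K) =
    monomial (mk4 0 4 0 0) 1 + monomial (mk4 2 0 2 0) 1 + monomial (mk4 1 2 1 0) (-2) := by
  have h1 : (monomial (mk4 1 2 1 0) (-2 : K)) = C (-2 : K) * monomial (mk4 1 2 1 0) 1 := by
    rw [C_mul_monomial, mul_one]
  have h2 : C (-2 : K) = (-2 : MvPolynomial (Fin 4) K) := by
    rw [map_neg]
    norm_num
    exact map_ofNat C 2
  rw [h1, h2, ← Xpow_prod, ← Xpow_prod, ← Xpow_prod]; ring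

lemma g4_eq (b : ℕ) :
    (X 0 ^ b * (X 0 * X 2 - X 1 ^ 2) - X 1 * X 2 ^ b * X 3 : MvPolynomial (Fin 4) K) =
    monomial (mk4 b 2 0 0) (-1) + monomial (mk4 (b+1) 0 1 0) 1 + monomial (mk4 0 1 b 1) (-1) := by
  have h1 : (monomial (mk4 b 2 0 0) (-1 : K)) = - monomial (mk4 b 2 0 0) (1:K) := by
    rw [← map_neg]
  have h2 : (monomial (mk4 0 1 b 1) (-1 : K)) = - monomial (mk4 0 1 b 1) (1:K) := by
    rw [← map_neg]
  rw [h1, h2, ← Xpow_prod, ← Xpow_prod, ← Xpow_prod]; ring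

lemma g5_eq (b' : ℕ) :
    (X 0 ^ (b'+1-1) * X 1 * (X 0 * X 2 - X 1 ^ 2) - X 2 ^ (b'+1+1) * X 3 :
      MvPolynomial (Fin 4) K) =
    monomial (mk4 b' 3 0 0) (-1) + monomial (mk4 (b'+1) 1 1 0) 1 +
      monomial (mk4 0 0 (b'+2) 1) (-1) := by
  have h1 : (monomial (mk4 b' 3 0 0) (-1 : K)) = - monomial (mk4 b' 3 0 0) (1:K) := by
    rw [← map_neg]
  have h2 : (monomial (mk4 0 0 (b'+2) 1) (-1 : K)) = - monomial (mk4 0 0 (b'+2) 1) (1:K) := by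
    rw [← map_neg]
  simp only [Nat.add_sub_cancel]
  rw [h1, h2, ← Xpow_prod, ← Xpow_prod, ← Xpow_prod]; ring

lemma supp3 {p1 p2 p3 : M4} {c1 c2 c3 : K} :
    (monomial p1 c1 + monomial p2 c2 + monomial p3 c3).support ⊆ {p1, p2, p3} := by
  intro e he
  rw [mem_support_iff, coeff_add, coeff_add, coeff_monomial, coeff_monomial,
    coeff_monomial] at he
  simp only [Finset.mem_insert, Finset.mem_singleton]
  by_contra hc
  push_neg at hc
  obtain ⟨h1, h2, h3⟩ := hc
  rw [if_neg (fun h => h1 h.symm), if_neg (fun h => h2 h.symm),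
    if_neg (fun h => h3 h.symm)] at he
  simp at he

lemma supp1 {p1 : M4} {c1 : K} : (monomial p1 c1).support ⊆ {p1} := by
  intro e he
  rw [mem_support_iff, coeff_monomial] at he
  simp only [Finset.mem_singleton]
  by_contra hc
  rw [if_neg (fun h => hc h.symm)] at he
  simp at he

lemma supp2 {p1 p2 : M4} {c1 c2 : K} :
    (monomial p1 c1 + monomial p2 c2).support ⊆ {p1, p2} := by
  intro e he
  rw [mem_support_iff, coeff_add, coeff_monomial, coeff_monomial] at he
  simp only [Finset.mem_insert, Finset.mem_singleton]
  by_contra hc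
  push_neg at hc
  obtain ⟨h1, h2⟩ := hc
  rw [if_neg (fun h => h1 h.symm), if_neg (fun h => h2 h.symm)] at he
  simp at he

lemma coeff3 {p1 p2 p3 : M4} {c1 c2 c3 : K} (h12 : p1 ≠ p2) (h13 : p1 ≠ p3) :
    coeff p1 (monomial p1 c1 + monomial p2 c2 + monomial p3 c3) = c1 := by
  rw [coeff_add, coeff_add, coeff_monomial, coeff_monomial, coeff_monomial,
    if_pos rfl, if_neg (fun h => h12 h.symm), if_neg (fun h => h13 h.symm)]
  ring

lemma lead_g1 : IsLeadMon drlt (X 3 ^ 2 : MvPolynomial (Fin 4) K) (mk4 0 0 0 2) := by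
  constructor
  · rw [mem_support_iff, g1_eq, coeff_monomial, if_pos rfl]
    exact one_ne_zero
  · intro e he hne
    rw [g1_eq] at he
    have := supp1 he
    simp only [Finset.mem_singleton] at this
    exact absurd this hne

lemma lead_g2 : IsLeadMon drlt (X 3 * (X 0 * X 2 - X 1 ^ 2) : MvPolynomial (Fin 4) K)
    (mk4 0 2 0 1) := by
  constructor
  · rw [mem_support_iff, g2_eq, coeff_add, coeff_monomial, coeff_monomial, if_pos rfl,
      if_neg (mk4_ne1 (by omega))]
    norm_num
  · intro e he hne
    rw [g2_eq] at he
    have := supp2 he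
    simp only [Finset.mem_insert, Finset.mem_singleton] at this
    rcases this with rfl | rfl
    · exact absurd rfl hne
    · exact drlt_wit2 (by rw [sum_mk4, sum_mk4]) (by simp) (by simp)

lemma lead_g3 : IsLeadMon drlt ((X 0 * X 2 - X 1 ^ 2) ^ 2 : MvPolynomial (Fin 4) K)
    (mk4 0 4 0 0) := by
  constructor
  · rw [mem_support_iff, g3_eq, coeff3 (mk4_ne1 (by omega)) (mk4_ne1 (by omega))]
    exact one_ne_zero
  · intro e he hne
    rw [g3_eq] at he
    have := supp3 he
    simp only [Finset.mem_insert, Finset.mem_singleton] at this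
    rcases this with rfl | rfl | rfl
    · exact absurd rfl hne
    · exact drlt_wit2 (by rw [sum_mk4, sum_mk4]) (by simp) (by simp)
    · exact drlt_wit2 (by rw [sum_mk4, sum_mk4]) (by simp) (by simp)

lemma lead_g4 (b : ℕ) :
    IsLeadMon drlt
      (X 0 ^ b * (X 0 * X 2 - X 1 ^ 2) - X 1 * X 2 ^ b * X 3 : MvPolynomial (Fin 4) K)
      (mk4 b 2 0 0) := by
  constructor
  · rw [mem_support_iff, g4_eq, coeff3 (mk4_ne1 (by omega)) (mk4_ne1 (by omega))]
    norm_num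
  · intro e he hne
    rw [g4_eq] at he
    have := supp3 he
    simp only [Finset.mem_insert, Finset.mem_singleton] at this
    rcases this with rfl | rfl | rfl
    · exact absurd rfl hne
    · exact drlt_wit2 (by rw [sum_mk4, sum_mk4]; try ring) (by simp) (by simp)
    · exact drlt_wit3 (by rw [sum_mk4, sum_mk4]; try ring) (by simp)

lemma lead_g5 (b' : ℕ) :
    IsLeadMon drlt
      (X 0 ^ (b'+1-1) * X 1 * (X 0 * X 2 - X 1 ^ 2) - X 2 ^ (b'+1+1) * X 3 :
        MvPolynomial (Fin 4) K)
      (mk4 b' 3 0 0) := by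
  constructor
  · rw [mem_support_iff, g5_eq, coeff3 (mk4_ne1 (by omega)) (mk4_ne1 (by omega))]
    norm_num
  · intro e he hne
    rw [g5_eq] at he
    have := supp3 he
    simp only [Finset.mem_insert, Finset.mem_singleton] at this
    rcases this with rfl | rfl | rfl
    · exact absurd rfl hne
    · exact drlt_wit2 (by rw [sum_mk4, sum_mk4]; try ring) (by simp) (by simp)
    · exact drlt_wit3 (by rw [sum_mk4, sum_mk4]; try ring) (by simp)

def Gset (K : Type*) [Field K] (b : ℕ) : Set (MvPolynomial (Fin 4) K) :=
  {X 3 ^ 2, X 3 * (X 0 * X 2 - X 1 ^ 2), (X 0 * X 2 - X 1 ^ 2) ^ 2,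
    X 0 ^ b * (X 0 * X 2 - X 1 ^ 2) - X 1 * X 2 ^ b * X 3,
    X 0 ^ (b - 1) * X 1 * (X 0 * X 2 - X 1 ^ 2) - X 2 ^ (b + 1) * X 3}

lemma Gset_sub_Vb (b : ℕ) (hb : 1 ≤ b) : Gset K b ⊆ (Vb K b : Set (MvPolynomial (Fin 4) K)) := by
  intro g hg
  rcases hg with rfl | rfl | rfl | rfl | rfl
  · exact g1_mem b
  · exact g2_mem b
  · exact g3_mem b
  · exact g4_mem b
  · exact g5_mem b hb

lemma nstd_case (b : ℕ) (hb : 1 ≤ b) (m : M4) (h : Nstd b m) :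
    ∃ g ∈ Gset K b, ∃ D : M4, IsLeadMon drlt g D ∧ D ≤ m := by
  rcases h with h | h | h | h | h
  · refine ⟨X 3 ^ 2, by left; rfl, mk4 0 0 0 2, lead_g1, ?_⟩
    rw [Finsupp.le_def]
    intro j
    rcases fin4_cases j with rfl|rfl|rfl|rfl <;> simp <;> omega
  · refine ⟨X 3 * (X 0 * X 2 - X 1 ^ 2), by right; left; rfl, mk4 0 2 0 1, lead_g2, ?_⟩
    rw [Finsupp.le_def]
    intro j
    rcases fin4_cases j with rfl|rfl|rfl|rfl <;> simp <;> omega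
  · refine ⟨(X 0 * X 2 - X 1 ^ 2) ^ 2, by right; right; left; rfl, mk4 0 4 0 0, lead_g3, ?_⟩
    rw [Finsupp.le_def]
    intro j
    rcases fin4_cases j with rfl|rfl|rfl|rfl <;> simp <;> omega
  · refine ⟨X 0 ^ b * (X 0 * X 2 - X 1 ^ 2) - X 1 * X 2 ^ b * X 3,
      by right; right; right; left; rfl, mk4 b 2 0 0, lead_g4 b, ?_⟩
    rw [Finsupp.le_def]
    intro j
    rcases fin4_cases j with rfl|rfl|rfl|rfl <;> simp <;> omega
  · obtain ⟨b', rfl⟩ : ∃ b', b = b' + 1 := ⟨b - 1, by omega⟩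
    refine ⟨X 0 ^ (b' + 1 - 1) * X 1 * (X 0 * X 2 - X 1 ^ 2) - X 2 ^ (b' + 1 + 1) * X 3,
      by right; right; right; right; rfl, mk4 b' 3 0 0, lead_g5 b', ?_⟩
    rw [Finsupp.le_def]
    intro j
    simp only [Nat.add_sub_cancel] at h
    rcases fin4_cases j with rfl|rfl|rfl|rfl <;> simp <;> omega

lemma red (b : ℕ) (hb : 1 ≤ b) :
    ∀ n : ℕ, ∀ f : MvPolynomial (Fin 4) K, f ∈ Vb K b →
    (∀ m ∈ f.support, Nstd b m → rho m < n) → f ≠ 0 →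
    (∀ d, IsLeadMon drlt f d → ¬ Nstd b d) → False := by
  intro n
  induction n using Nat.strong_induction_on with
  | _ n IH =>
  intro f hfV hbound hf0 hlead
  classical
  by_cases hall : ∀ m ∈ f.support, ¬ Nstd b m
  · obtain ⟨hphi, h, hdel, hzet⟩ := hfV
    exact hf0 (keyB b hb f h hall hphi hdel hzet)
  · push_neg at hall
    obtain ⟨m0, hm0s, hm0n⟩ := hall
    set N := f.support.filter (fun m => Nstd b m) with hN
    have hNne : N.Nonempty := ⟨m0, by simp [hN, hm0s, hm0n]⟩
    obtain ⟨m, hmN, hmmax⟩ := Finset.exists_max_image N rho hNne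
    have hms : m ∈ f.support := (Finset.mem_filter.mp hmN).1
    have hmn : Nstd b m := (Finset.mem_filter.mp hmN).2
    have hmaxd : ∀ e ∈ f.support, Nstd b e → e = m ∨ drlt e m := by
      intro e he hen
      by_cases hem : e = m
      · exact Or.inl hem
      · rcases drlt_total hem with hlt | hlt
        · exact Or.inr hlt
        · exact absurd (hmmax e (Finset.mem_filter.mpr ⟨he, hen⟩))
            (not_le.mpr (rho_lt_of_drlt hlt))
    obtain ⟨d, hd⟩ := exists_leadmon hf0
    have hdn : ¬ Nstd b d := hlead d hd
    have hmd : m ≠ d := fun hc => hdn (hc ▸ hmn)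
    have hdm : drlt m d := hd.2 m hms hmd
    obtain ⟨g, hgG, D, hgl, hDm⟩ := nstd_case (K := K) b hb m hmn
    have hgV : g ∈ Vb K b := Gset_sub_Vb (K := K) b hb hgG
    have hlc : coeff D g ≠ 0 := mem_support_iff.mp hgl.1
    set k : K := coeff m f / coeff D g with hk
    set f2 : MvPolynomial (Fin 4) K := f - C k * (monomial (m - D) 1 * g) with hf2
    have hsub : ∀ e ∈ (C k * (monomial (m - D) 1 * g)).support, e = m ∨ drlt e m := by
      intro e he
      have he' : coeff e (C k * (monomial (m - D) 1 * g)) ≠ 0 := mem_support_iff.mp he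
      rw [coeff_C_mul, coeff_monomial_mul'] at he'
      by_cases hle : m - D ≤ e
      · rw [if_pos hle, one_mul] at he'
        have hsup : e - (m - D) ∈ g.support := by
          rw [mem_support_iff]
          intro hc
          rw [hc, mul_zero] at he'
          exact he' rfl
        by_cases hdd : e - (m - D) = D
        · left
          have h1 : e - (m - D) + (m - D) = e := tsub_add_cancel_of_le hle
          rw [hdd] at h1
          rw [← h1, add_comm, tsub_add_cancel_of_le hDm]
        · right
          have hlt : drlt (e - (m - D)) D := hgl.2 _ hsup hdd
          have h2 := drlt_add_right (m - D) hlt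
          rwa [tsub_add_cancel_of_le hle, add_comm D (m - D), tsub_add_cancel_of_le hDm] at h2
      · rw [if_neg hle, mul_zero] at he'
        exact absurd rfl he'
    have hc2m : coeff m f2 = 0 := by
      rw [hf2, coeff_sub, coeff_C_mul, coeff_monomial_mul', if_pos tsub_le_self, one_mul,
        tsub_tsub_cancel_of_le hDm, hk, div_mul_cancel₀ _ hlc, sub_self]
    have hm2s : m ∉ f2.support := by
      rw [notMem_support_iff]
      exact hc2m
    have hsupp2 : ∀ e ∈ f2.support, e ∈ f.support ∨ (e = m ∨ drlt e m) := by
      intro e he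
      have hee : e ∈ f.support ∪ (C k * (monomial (m - D) 1 * g)).support := by
        have h1 : f2 = f + (- (C k * (monomial (m - D) 1 * g))) := by rw [hf2]; ring
        have h2 := support_add (p := f) (q := - (C k * (monomial (m - D) 1 * g))) (h1 ▸ he)
        rwa [support_neg] at h2
      rcases Finset.mem_union.mp hee with h1 | h1
      · exact Or.inl h1
      · exact Or.inr (hsub e h1)
    have hcoefd : coeff d f2 = coeff d f := by
      have hz : coeff d (C k * (monomial (m - D) 1 * g)) = 0 := by
        by_contra hc
        rcases hsub d (mem_support_iff.mpr hc) with heq | hlt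
        · exact hmd heq.symm
        · exact drlt_asymm hdm hlt
      rw [hf2, coeff_sub, hz, sub_zero]
    have hf20 : f2 ≠ 0 := by
      intro hc
      apply mem_support_iff.mp hd.1
      rw [← hcoefd, hc, coeff_zero]
    have hlead2 : IsLeadMon drlt f2 d := by
      refine ⟨mem_support_iff.mpr (by rw [hcoefd]; exact mem_support_iff.mp hd.1), ?_⟩
      intro e he hne
      rcases hsupp2 e he with h1 | h1
      · exact hd.2 e h1 hne
      · rcases h1 with rfl | h1
        · exact hdm
        · rcases drlt_total hne with h' | h'
          · exact h'
          · exfalso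
            have r1 := rho_lt_of_drlt h1
            have r2 := rho_lt_of_drlt hdm
            have r3 := rho_lt_of_drlt h'
            omega
    have hVf2 : f2 ∈ Vb K b := by
      rw [hf2]
      exact Submodule.sub_mem _ hfV (Ideal.mul_mem_left _ _ (Ideal.mul_mem_left _ _ hgV))
    have hbound2 : ∀ e ∈ f2.support, Nstd b e → rho e < rho m := by
      intro e he hen
      have hem : e ≠ m := fun hc => hm2s (hc ▸ he)
      rcases hsupp2 e he with h1 | h1
      · rcases hmaxd e h1 hen with hc | hc
        · exact absurd hc hem
        · exact rho_lt_of_drlt hc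
      · rcases h1 with hc | hc
        · exact absurd hc hem
        · exact rho_lt_of_drlt hc
    exact IH (rho m) (hbound m hms hmn) f2 hVf2 hbound2 hf20
      (fun d' hd' => by rw [leadmon_unique hd' hlead2]; exact hdn)

lemma main (b : ℕ) (hb : 1 ≤ b) (f : MvPolynomial (Fin 4) K) (hf : f ∈ Vb K b)
    (hf0 : f ≠ 0) (d : M4) (hd : IsLeadMon drlt f d) : Nstd b d := by
  by_contra hdn
  apply red b hb ((f.support.sup rho) + 1) f hf ?_ hf0 ?_
  · intro m hm _
    exact Nat.lt_succ_of_le (Finset.le_sup hm)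
  · intro d' hd'
    rw [leadmon_unique hd' hd]
    exact hdn

lemma final (K : Type*) [Field K] (b : ℕ) (hb : 1 ≤ b) :
    initialIdeal drlt (Ideal.span (Gset K b))
      = Ideal.span {m | ∃ g ∈ Gset K b, ∃ d, IsLeadMon drlt g d ∧ m = monomial d 1} := by
  apply le_antisymm
  · rw [initialIdeal]
    apply Ideal.span_le.mpr
    rintro mm ⟨f, hfI, hf0, d, hld, rfl⟩
    have hGV : Ideal.span (Gset K b) ≤ Vb K b := Ideal.span_le.mpr (Gset_sub_Vb (K := K) b hb)
    have hnd : Nstd b d := main b hb f (hGV hfI) hf0 d hld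
    obtain ⟨g, hgG, D, hgl, hDd⟩ := nstd_case (K := K) b hb d hnd
    have hfac : (monomial d 1 : MvPolynomial (Fin 4) K) = monomial (d - D) 1 * monomial D 1 := by
      rw [monomial_mul, one_mul, tsub_add_cancel_of_le hDd]
    rw [hfac]
    exact Ideal.mul_mem_left _ _ (Ideal.subset_span ⟨g, hgG, D, hgl, rfl⟩)
  · apply Ideal.span_le.mpr
    rintro mm ⟨g, hgG, d, hld, rfl⟩
    apply Ideal.subset_span
    refine ⟨g, Ideal.subset_span hgG, ?_, d, hld, rfl⟩
    intro hc
    apply mem_support_iff.mp hld.1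
    rw [hc, coeff_zero]

end Phi
end GB16


/-- In `K[x,y,z,w]`, for `b ≥ 1` the five polynomials
`w², w(xz−y²), (xz−y²)², x^b(xz−y²) − y z^b w, x^{b−1}y(xz−y²) − z^{b+1}w`
form a Gröbner basis, with respect to degrevlex with `x > y > z > w`, of the ideal they
generate: the initial ideal is generated by their leading monomials. -/
theorem stmt16 {K : Type*} [Field K] [CharZero K] (b : ℕ) (hb : 1 ≤ b) :
    let x : MvPolynomial (Fin 4) K := X 0
    let y : MvPolynomial (Fin 4) K := X 1
    let z : MvPolynomial (Fin 4) K := X 2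
    let w : MvPolynomial (Fin 4) K := X 3
    let G : Set (MvPolynomial (Fin 4) K) :=
      {w ^ 2, w * (x * z - y ^ 2), (x * z - y ^ 2) ^ 2,
        x ^ b * (x * z - y ^ 2) - y * z ^ b * w,
        x ^ (b - 1) * y * (x * z - y ^ 2) - z ^ (b + 1) * w}
    initialIdeal drlt (Ideal.span G)
      = Ideal.span {m | ∃ g ∈ G, ∃ d, IsLeadMon drlt g d ∧ m = monomial d 1} := by
  intro x y z w G
  exact GB16.final K b hb
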